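/- Jaillet-Soto-Zenklusen span lemma: let M be a matroid on ground set U with distinct weights, U partitioned into S and P. Order the max-weight basis of S as X_1, ..., X_k by decreasing weight. If y ∈ P is in the max-weight basis of U, and i is minimal with y ∈ span({X_1, ..., X_i}), then w(y) > w(X_i). -/

import Mathlib

/-- Jaillet–Soto–Zenklusen span lemma.  `M` is a matroid on the finite
ground set (all of `α`), weights `w` are distinct and positive, and the ground set is
partitioned into `S` and `P` (so `P = univ \ S`; we only need `y ∉ S`).  `Bs` is the
max-weight basis of `S` and `Bu` a max-weight basis of the whole ground set with
`y ∈ Bu` and `y ∉ S`.  If `x = X_i ∈ Bs` and `i` is minimal with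
`y ∈ span {X_1, ..., X_i}` — i.e. `y` is spanned by the elements of `Bs` of weight
`≥ w x` but not by those of weight `> w x` — then `w y > w x`. -/
theorem stmt17 {α : Type*} [DecidableEq α] [Fintype α]
    (M : Matroid α) (hE : M.E = Set.univ)
    (w : α → ℝ) (hw : Function.Injective w) (hw0 : ∀ z, 0 < w z)
    (S Bs : Finset α) (hBs : M.IsBasis ↑Bs ↑S)
    (hBsmax : ∀ B' : Finset α, M.IsBasis ↑B' ↑S → ∑ z ∈ B', w z ≤ ∑ z ∈ Bs, w z)
    (Bu : Finset α) (hBu : M.IsBase ↑Bu)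
    (hBumax : ∀ B' : Finset α, M.IsBase ↑B' → ∑ z ∈ B', w z ≤ ∑ z ∈ Bu, w z)
    (y : α) (hy : y ∈ Bu) (hyP : y ∉ S)
    (x : α) (hx : x ∈ Bs)
    (hspan : y ∈ M.closure ↑(Bs.filter (fun z => w x ≤ w z)))
    (hmin : y ∉ M.closure ↑(Bs.filter (fun z => w x < w z))) :
    w x < w y := by
  by_contra hlt
  push_neg at hlt
  -- y ≠ x since y ∉ S but x ∈ Bs ⊆ S
  have hBsS : (Bs : Set α) ⊆ (S : Set α) := hBs.subset
  have hyx : y ≠ x := fun h => hyP (by simpa using hBsS (by simpa [h] using hx))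
  have hwyx : w y < w x := lt_of_le_of_ne hlt (fun h => hyx (hw h))
  -- set A of heavy elements of Bs
  set A : Finset α := Bs.filter (fun z => w x ≤ w z) with hA
  have hBuIndep : M.Indep ↑Bu := hBu.indep
  have hyncl : y ∉ M.closure ((Bu : Set α) \ {y}) :=
    hBuIndep.notMem_closure_diff_of_mem (by simpa using hy)
  -- find z ∈ A not in closure(Bu \ {y})
  have hzex : ∃ z ∈ A, z ∉ M.closure ((Bu : Set α) \ {y}) := by
    by_contra h
    push_neg at h
    have hsub : (A : Set α) ⊆ M.closure ((Bu : Set α) \ {y}) := fun z hz => h z (by simpa using hz)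
    exact hyncl (Matroid.closure_subset_closure_of_subset_closure hsub hspan)
  obtain ⟨z, hzA, hzcl⟩ := hzex
  have hzS : z ∈ S := hBsS (by simpa using (Finset.mem_filter.mp hzA).1)
  have hzy : z ≠ y := fun h => hyP (h ▸ hzS)
  have hzBu : z ∉ Bu := by
    intro hzBu
    exact hzcl (M.subset_closure ((Bu : Set α) \ {y})
      (by rw [hE]; exact Set.subset_univ _) ⟨hzBu, by simpa using hzy⟩)
  -- the exchanged base
  have hindep : M.Indep (insert z ((Bu : Set α) \ {y})) := by
    rw [(hBuIndep.subset Set.diff_subset).insert_indep_iff_of_notMem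
      (by simp [hzBu])]
    exact ⟨by rw [hE]; trivial, hzcl⟩
  have hbase : M.IsBase (insert z ((Bu : Set α) \ {y})) :=
    hBu.exchange_isBase_of_indep (by simpa using hzBu) hindep
  -- as a finset
  have hcoe : (↑(insert z (Bu.erase y)) : Set α) = insert z ((Bu : Set α) \ {y}) := by
    simp [Finset.coe_insert, Finset.coe_erase]
  have hle := hBumax (insert z (Bu.erase y)) (by rw [hcoe]; exact hbase)
  have hsum : ∑ u ∈ insert z (Bu.erase y), w u = w z + (∑ u ∈ Bu, w u - w y) := by
    rw [Finset.sum_insert (by simp [hzBu]), Finset.sum_erase_eq_sub hy]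
  have hwzy : w y < w z := lt_of_lt_of_le hwyx (Finset.mem_filter.mp hzA).2
  rw [hsum] at hle
  linarith
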